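/- The reduction from 3-Dimensional Matching to RDSCP with s = 0 and t = 4 is correct: the constructed instance admits d = k pairwise disjoint set covers of size at most 4 if and only if the 3-Dimensional Matching instance has k pairwise disjoint hyperedges. -/

import Mathlib

/-- The universe of the 3-Dimensional Matching reduction: elements `u^X_j, u^Y_j, u^Z_j`
(encoded as `(j, 0), (j, 1), (j, 2)`) and the four special elements `u_X, u_Y, u_Z, u_*`
(encoded as `Fin 4`). -/
def TDMUni (m : ℕ) := (Fin m × Fin 3) ⊕ Fin 4

/-- The set `s^X_i`: all `u^X_j` with `x_{i} ` the first coordinate of `e_j`, plus `u_X`. -/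
def sX {n m : ℕ} (M : Fin m → Fin n × Fin n × Fin n) (i : Fin n) : Set (TDMUni m) :=
  {w | (∃ j, w = Sum.inl (j, 0) ∧ (M j).1 = i) ∨ w = Sum.inr 0}

/-- The set `s^Y_i`. -/
def sY {n m : ℕ} (M : Fin m → Fin n × Fin n × Fin n) (i : Fin n) : Set (TDMUni m) :=
  {w | (∃ j, w = Sum.inl (j, 1) ∧ (M j).2.1 = i) ∨ w = Sum.inr 1}

/-- The set `s^Z_i`. -/
def sZ {n m : ℕ} (M : Fin m → Fin n × Fin n × Fin n) (i : Fin n) : Set (TDMUni m) :=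
  {w | (∃ j, w = Sum.inl (j, 2) ∧ (M j).2.2 = i) ∨ w = Sum.inr 2}

/-- The set `s^*_j`: all elements except `u^X_j, u^Y_j, u^Z_j, u_X, u_Y, u_Z`. -/
def sStar {m : ℕ} (j : Fin m) : Set (TDMUni m) :=
  {w | w ≠ Sum.inl (j, 0) ∧ w ≠ Sum.inl (j, 1) ∧ w ≠ Sum.inl (j, 2) ∧
       w ≠ Sum.inr 0 ∧ w ≠ Sum.inr 1 ∧ w ≠ Sum.inr 2}

/-- The constructed family `F = F_X ∪ F_Y ∪ F_Z ∪ F^*` (as a multiset). -/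
def TDMFam {n m : ℕ} (M : Fin m → Fin n × Fin n × Fin n) : Multiset (Set (TDMUni m)) :=
  (Finset.univ.val.map (sX M)) + (Finset.univ.val.map (sY M)) +
    (Finset.univ.val.map (sZ M)) + (Finset.univ.val.map sStar)

namespace TDMAux

lemma tinl_ne_tinr {m} {a : Fin m × Fin 3} {b : Fin 4} : (Sum.inl a : TDMUni m) ≠ Sum.inr b :=
  fun h => Sum.inl_ne_inr h

lemma tinr_inj {m} {a b : Fin 4} (h : (Sum.inr a : TDMUni m) = Sum.inr b) : a = b := Sum.inr.inj h

lemma tinl_inj {m} {a b : Fin m × Fin 3} (h : (Sum.inl a : TDMUni m) = Sum.inl b) : a = b :=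
  Sum.inl.inj h

lemma tinr_ne {m} {a b : Fin 4} (h : a ≠ b) : (Sum.inr a : TDMUni m) ≠ Sum.inr b :=
  fun e => h (tinr_inj e)

lemma tinl_ne {m} {a b : Fin m × Fin 3} (h : a ≠ b) : (Sum.inl a : TDMUni m) ≠ Sum.inl b :=
  fun e => h (tinl_inj e)

/-- Case analysis principle for `TDMUni`. -/
lemma uni_cases {m} {motive : TDMUni m → Prop} (w : TDMUni m)
    (hl : ∀ j c, motive (Sum.inl (j, c))) (hr : ∀ q, motive (Sum.inr q)) : motive w :=
  match w with
  | Sum.inl (j, c) => hl j c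
  | Sum.inr q => hr q

variable {n m : ℕ} {M : Fin m → Fin n × Fin n × Fin n}

-- membership facts
lemma inr0_sX (x : Fin n) : (Sum.inr 0 : TDMUni m) ∈ sX M x := Or.inr rfl
lemma inr1_sY (y : Fin n) : (Sum.inr 1 : TDMUni m) ∈ sY M y := Or.inr rfl
lemma inr2_sZ (z : Fin n) : (Sum.inr 2 : TDMUni m) ∈ sZ M z := Or.inr rfl

lemma inr3_sStar (j : Fin m) : (Sum.inr 3 : TDMUni m) ∈ sStar j :=
  ⟨fun h => tinl_ne_tinr h.symm, fun h => tinl_ne_tinr h.symm, fun h => tinl_ne_tinr h.symm,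
   tinr_ne (by decide), tinr_ne (by decide), tinr_ne (by decide)⟩

lemma inr_not_sX {q : Fin 4} (hq : q ≠ 0) (x : Fin n) : (Sum.inr q : TDMUni m) ∉ sX M x := by
  rintro (⟨j, hj, -⟩ | hj)
  · exact tinl_ne_tinr hj.symm
  · exact hq (tinr_inj hj)

lemma inr_not_sY {q : Fin 4} (hq : q ≠ 1) (y : Fin n) : (Sum.inr q : TDMUni m) ∉ sY M y := by
  rintro (⟨j, hj, -⟩ | hj)
  · exact tinl_ne_tinr hj.symm
  · exact hq (tinr_inj hj)

lemma inr_not_sZ {q : Fin 4} (hq : q ≠ 2) (z : Fin n) : (Sum.inr q : TDMUni m) ∉ sZ M z := by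
  rintro (⟨j, hj, -⟩ | hj)
  · exact tinl_ne_tinr hj.symm
  · exact hq (tinr_inj hj)

lemma inr0_not_sStar (j : Fin m) : (Sum.inr 0 : TDMUni m) ∉ sStar j := fun h => h.2.2.2.1 rfl
lemma inr1_not_sStar (j : Fin m) : (Sum.inr 1 : TDMUni m) ∉ sStar j := fun h => h.2.2.2.2.1 rfl
lemma inr2_not_sStar (j : Fin m) : (Sum.inr 2 : TDMUni m) ∉ sStar j := fun h => h.2.2.2.2.2 rfl

lemma inl_mem_sX (j : Fin m) : (Sum.inl (j, 0) : TDMUni m) ∈ sX M ((M j).1) :=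
  Or.inl ⟨j, rfl, rfl⟩
lemma inl_mem_sY (j : Fin m) : (Sum.inl (j, 1) : TDMUni m) ∈ sY M ((M j).2.1) :=
  Or.inl ⟨j, rfl, rfl⟩
lemma inl_mem_sZ (j : Fin m) : (Sum.inl (j, 2) : TDMUni m) ∈ sZ M ((M j).2.2) :=
  Or.inl ⟨j, rfl, rfl⟩

lemma inl_sX {j : Fin m} {c : Fin 3} {x : Fin n} (h : (Sum.inl (j, c) : TDMUni m) ∈ sX M x) :
    c = 0 ∧ (M j).1 = x := by
  rcases h with ⟨j', hj, hx⟩ | hj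
  · obtain ⟨h1, h2⟩ := Prod.mk.injEq .. ▸ tinl_inj hj
    exact ⟨h2, h1 ▸ hx⟩
  · exact absurd hj tinl_ne_tinr

lemma inl_sY {j : Fin m} {c : Fin 3} {y : Fin n} (h : (Sum.inl (j, c) : TDMUni m) ∈ sY M y) :
    c = 1 ∧ (M j).2.1 = y := by
  rcases h with ⟨j', hj, hx⟩ | hj
  · obtain ⟨h1, h2⟩ := Prod.mk.injEq .. ▸ tinl_inj hj
    exact ⟨h2, h1 ▸ hx⟩
  · exact absurd hj tinl_ne_tinr

lemma inl_sZ {j : Fin m} {c : Fin 3} {z : Fin n} (h : (Sum.inl (j, c) : TDMUni m) ∈ sZ M z) :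
    c = 2 ∧ (M j).2.2 = z := by
  rcases h with ⟨j', hj, hx⟩ | hj
  · obtain ⟨h1, h2⟩ := Prod.mk.injEq .. ▸ tinl_inj hj
    exact ⟨h2, h1 ▸ hx⟩
  · exact absurd hj tinl_ne_tinr

lemma inl_sStar_of_ne {j j' : Fin m} {c : Fin 3} (h : j ≠ j') :
    (Sum.inl (j, c) : TDMUni m) ∈ sStar j' :=
  ⟨tinl_ne fun e => h (congrArg Prod.fst e), tinl_ne fun e => h (congrArg Prod.fst e),
   tinl_ne fun e => h (congrArg Prod.fst e), tinl_ne_tinr, tinl_ne_tinr, tinl_ne_tinr⟩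

lemma inl_not_sStar_self {j : Fin m} {c : Fin 3} : (Sum.inl (j, c) : TDMUni m) ∉ sStar j := by
  rintro ⟨h0, h1, h2, -⟩
  have e0 : c ≠ 0 := fun e => h0 (by rw [e])
  have e1 : c ≠ 1 := fun e => h1 (by rw [e])
  have e2 : c ≠ 2 := fun e => h2 (by rw [e])
  omega

-- distinctness of the sets
lemma sX_ne_sY {x y : Fin n} : sX M x ≠ sY (m := m) M y :=
  fun h => inr_not_sY (by decide) y (h ▸ inr0_sX x)
lemma sX_ne_sZ {x z : Fin n} : sX M x ≠ sZ (m := m) M z :=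
  fun h => inr_not_sZ (by decide) z (h ▸ inr0_sX x)
lemma sX_ne_sStar {x : Fin n} {j : Fin m} : sX M x ≠ sStar j :=
  fun h => inr0_not_sStar j (h ▸ inr0_sX x)
lemma sY_ne_sZ {y z : Fin n} : sY M y ≠ sZ (m := m) M z :=
  fun h => inr_not_sZ (by decide) z (h ▸ inr1_sY y)
lemma sY_ne_sStar {y : Fin n} {j : Fin m} : sY M y ≠ sStar j :=
  fun h => inr1_not_sStar j (h ▸ inr1_sY y)
lemma sZ_ne_sStar {z : Fin n} {j : Fin m} : sZ M z ≠ sStar j :=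
  fun h => inr2_not_sStar j (h ▸ inr2_sZ z)

lemma sX_inj_at {j : Fin m} {x : Fin n} (h : sX M ((M j).1) = sX M x) : (M j).1 = x :=
  (inl_sX (h ▸ inl_mem_sX j)).2
lemma sY_inj_at {j : Fin m} {y : Fin n} (h : sY M ((M j).2.1) = sY M y) : (M j).2.1 = y :=
  (inl_sY (h ▸ inl_mem_sY j)).2
lemma sZ_inj_at {j : Fin m} {z : Fin n} (h : sZ M ((M j).2.2) = sZ M z) : (M j).2.2 = z :=
  (inl_sZ (h ▸ inl_mem_sZ j)).2

lemma mem_TDMFam {A : Set (TDMUni m)} (h : A ∈ TDMFam M) :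
    (∃ x, A = sX M x) ∨ (∃ y, A = sY M y) ∨ (∃ z, A = sZ M z) ∨ (∃ j, A = sStar j) := by
  simp only [TDMFam, Multiset.mem_add, Multiset.mem_map] at h
  rcases h with ((⟨x, -, hx⟩ | ⟨y, -, hy⟩) | ⟨z, -, hz⟩) | ⟨j, -, hj⟩
  · exact Or.inl ⟨x, hx.symm⟩
  · exact Or.inr (Or.inl ⟨y, hy.symm⟩)
  · exact Or.inr (Or.inr (Or.inl ⟨z, hz.symm⟩))
  · exact Or.inr (Or.inr (Or.inr ⟨j, hj.symm⟩))

open Multiset in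
lemma count_sX_le_one [DecidableEq (Set (TDMUni m))] (j : Fin m) :
    Multiset.count (sX M ((M j).1)) (TDMFam M) ≤ 1 := by
  have hY : count (sX M ((M j).1)) (Finset.univ.val.map (sY M)) = 0 := by
    rw [count_eq_zero]
    rintro hm
    obtain ⟨y, -, hy⟩ := Multiset.mem_map.mp hm
    exact sX_ne_sY hy.symm
  have hZ : count (sX M ((M j).1)) (Finset.univ.val.map (sZ M)) = 0 := by
    rw [count_eq_zero]
    rintro hm
    obtain ⟨z, -, hz⟩ := Multiset.mem_map.mp hm
    exact sX_ne_sZ hz.symm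
  have hS : count (sX M ((M j).1)) (Finset.univ.val.map sStar) = 0 := by
    rw [count_eq_zero]
    rintro hm
    obtain ⟨j', -, hj⟩ := Multiset.mem_map.mp hm
    exact sX_ne_sStar hj.symm
  have hX : count (sX M ((M j).1)) (Finset.univ.val.map (sX M)) ≤ 1 := by
    rw [Multiset.count_map]
    have : Multiset.filter (fun x' => sX M ((M j).1) = sX M x') Finset.univ.val
        = (Finset.filter (fun x' => sX M ((M j).1) = sX M x') Finset.univ).val :=
      (Finset.filter_val _ _).symm
    rw [this]
    exact Finset.card_le_one.mpr fun a ha b hb => by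
      rw [Finset.mem_filter] at ha hb
      exact (sX_inj_at ha.2).symm.trans (sX_inj_at hb.2)
  simp only [TDMFam, Multiset.count_add, hY, hZ, hS]
  omega

open Multiset in
lemma count_sY_le_one [DecidableEq (Set (TDMUni m))] (j : Fin m) :
    Multiset.count (sY M ((M j).2.1)) (TDMFam M) ≤ 1 := by
  have hX : count (sY M ((M j).2.1)) (Finset.univ.val.map (sX M)) = 0 := by
    rw [count_eq_zero]
    rintro hm
    obtain ⟨x, -, hx⟩ := Multiset.mem_map.mp hm
    exact sX_ne_sY hx
  have hZ : count (sY M ((M j).2.1)) (Finset.univ.val.map (sZ M)) = 0 := by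
    rw [count_eq_zero]
    rintro hm
    obtain ⟨z, -, hz⟩ := Multiset.mem_map.mp hm
    exact sY_ne_sZ hz.symm
  have hS : count (sY M ((M j).2.1)) (Finset.univ.val.map sStar) = 0 := by
    rw [count_eq_zero]
    rintro hm
    obtain ⟨j', -, hj⟩ := Multiset.mem_map.mp hm
    exact sY_ne_sStar hj.symm
  have hY : count (sY M ((M j).2.1)) (Finset.univ.val.map (sY M)) ≤ 1 := by
    rw [Multiset.count_map]
    have : Multiset.filter (fun y' => sY M ((M j).2.1) = sY M y') Finset.univ.val
        = (Finset.filter (fun y' => sY M ((M j).2.1) = sY M y') Finset.univ).val :=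
      (Finset.filter_val _ _).symm
    rw [this]
    exact Finset.card_le_one.mpr fun a ha b hb => by
      rw [Finset.mem_filter] at ha hb
      exact (sY_inj_at ha.2).symm.trans (sY_inj_at hb.2)
  simp only [TDMFam, Multiset.count_add, hX, hZ, hS]
  omega

open Multiset in
lemma count_sZ_le_one [DecidableEq (Set (TDMUni m))] (j : Fin m) :
    Multiset.count (sZ M ((M j).2.2)) (TDMFam M) ≤ 1 := by
  have hX : count (sZ M ((M j).2.2)) (Finset.univ.val.map (sX M)) = 0 := by
    rw [count_eq_zero]
    rintro hm
    obtain ⟨x, -, hx⟩ := Multiset.mem_map.mp hm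
    exact sX_ne_sZ hx
  have hY : count (sZ M ((M j).2.2)) (Finset.univ.val.map (sY M)) = 0 := by
    rw [count_eq_zero]
    rintro hm
    obtain ⟨y, -, hy⟩ := Multiset.mem_map.mp hm
    exact sY_ne_sZ hy
  have hS : count (sZ M ((M j).2.2)) (Finset.univ.val.map sStar) = 0 := by
    rw [count_eq_zero]
    rintro hm
    obtain ⟨j', -, hj⟩ := Multiset.mem_map.mp hm
    exact sZ_ne_sStar hj.symm
  have hZ : count (sZ M ((M j).2.2)) (Finset.univ.val.map (sZ M)) ≤ 1 := by
    rw [Multiset.count_map]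
    have : Multiset.filter (fun z' => sZ M ((M j).2.2) = sZ M z') Finset.univ.val
        = (Finset.filter (fun z' => sZ M ((M j).2.2) = sZ M z') Finset.univ).val :=
      (Finset.filter_val _ _).symm
    rw [this]
    exact Finset.card_le_one.mpr fun a ha b hb => by
      rw [Finset.mem_filter] at ha hb
      exact (sZ_inj_at ha.2).symm.trans (sZ_inj_at hb.2)
  simp only [TDMFam, Multiset.count_add, hX, hY, hS]
  omega

lemma sum_singleton_map {α β : Type*} (s : Finset α) (g : α → β) :
    (∑ x ∈ s, ({g x} : Multiset β)) = s.val.map g := by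
  rw [Finset.sum_eq_multiset_sum]
  induction s.val using Multiset.induction with
  | empty => simp
  | cons a t ih => simp [ih]

end TDMAux

open TDMAux in
theorem stmt9 (n m k : ℕ) (M : Fin m → Fin n × Fin n × Fin n) :
    (∃ T : Fin k → Multiset (Set (TDMUni m)),
        (∑ i, T i) ≤ TDMFam M ∧
        ∀ i, Multiset.card (T i) ≤ 4 ∧ ∀ w : TDMUni m, ∃ A ∈ T i, w ∈ A) ↔
      (∃ f : Fin k → Fin m, ∀ i i' : Fin k, i ≠ i' →
        (M (f i)).1 ≠ (M (f i')).1 ∧ (M (f i)).2.1 ≠ (M (f i')).2.1 ∧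
          (M (f i)).2.2 ≠ (M (f i')).2.2) := by
  classical
  constructor
  · rintro ⟨T, hle, hT⟩
    have hTi : ∀ i, T i ≤ TDMFam M := fun i =>
      le_trans (Finset.single_le_sum (f := T) (fun _ _ => Multiset.zero_le _)
        (Finset.mem_univ i)) hle
    -- extract the structure of each cover
    have key : ∀ i, ∃ jj : Fin m, sX M ((M jj).1) ∈ T i ∧ sY M ((M jj).2.1) ∈ T i ∧
        sZ M ((M jj).2.2) ∈ T i := by
      intro i
      obtain ⟨A0, hA0T, hA0⟩ := (hT i).2 (Sum.inr 0)
      obtain ⟨A1, hA1T, hA1⟩ := (hT i).2 (Sum.inr 1)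
      obtain ⟨A2, hA2T, hA2⟩ := (hT i).2 (Sum.inr 2)
      obtain ⟨A3, hA3T, hA3⟩ := (hT i).2 (Sum.inr 3)
      -- classify A0
      obtain ⟨x0, rfl⟩ : ∃ x, A0 = sX M x := by
        rcases mem_TDMFam (Multiset.mem_of_le (hTi i) hA0T) with h | ⟨y, rfl⟩ | ⟨z, rfl⟩ | ⟨j, rfl⟩
        · exact h
        · exact absurd hA0 (inr_not_sY (by decide) y)
        · exact absurd hA0 (inr_not_sZ (by decide) z)
        · exact absurd hA0 (inr0_not_sStar j)
      obtain ⟨y0, rfl⟩ : ∃ y, A1 = sY M y := by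
        rcases mem_TDMFam (Multiset.mem_of_le (hTi i) hA1T) with ⟨x, rfl⟩ | h | ⟨z, rfl⟩ | ⟨j, rfl⟩
        · exact absurd hA1 (inr_not_sX (by decide) x)
        · exact h
        · exact absurd hA1 (inr_not_sZ (by decide) z)
        · exact absurd hA1 (inr1_not_sStar j)
      obtain ⟨z0, rfl⟩ : ∃ z, A2 = sZ M z := by
        rcases mem_TDMFam (Multiset.mem_of_le (hTi i) hA2T) with ⟨x, rfl⟩ | ⟨y, rfl⟩ | h | ⟨j, rfl⟩
        · exact absurd hA2 (inr_not_sX (by decide) x)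
        · exact absurd hA2 (inr_not_sY (by decide) y)
        · exact h
        · exact absurd hA2 (inr2_not_sStar j)
      obtain ⟨j0, rfl⟩ : ∃ j, A3 = sStar j := by
        rcases mem_TDMFam (Multiset.mem_of_le (hTi i) hA3T) with ⟨x, rfl⟩ | ⟨y, rfl⟩ | ⟨z, rfl⟩ | h
        · exact absurd hA3 (inr_not_sX (by decide) x)
        · exact absurd hA3 (inr_not_sY (by decide) y)
        · exact absurd hA3 (inr_not_sZ (by decide) z)
        · exact h
      -- the four sets are distinct, so T i is exactly them
      set S : Finset (Set (TDMUni m)) := {sX M x0, sY M y0, sZ M z0, sStar j0} with hS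
      have hSsub : S.val ≤ T i := by
        rw [Finset.val_le_iff_val_subset]
        intro A hA
        rw [Finset.mem_val, hS] at hA
        rcases Finset.mem_insert.mp hA with rfl | hA
        · exact hA0T
        rcases Finset.mem_insert.mp hA with rfl | hA
        · exact hA1T
        rcases Finset.mem_insert.mp hA with rfl | hA
        · exact hA2T
        rw [Finset.mem_singleton] at hA
        subst hA
        exact hA3T
      have hScard : S.card = 4 := by
        rw [hS]
        rw [Finset.card_insert_of_notMem (by
          simp only [Finset.mem_insert, Finset.mem_singleton]
          push_neg
          exact ⟨sX_ne_sY, sX_ne_sZ, sX_ne_sStar⟩),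
          Finset.card_insert_of_notMem (by
          simp only [Finset.mem_insert, Finset.mem_singleton]
          push_neg
          exact ⟨sY_ne_sZ, sY_ne_sStar⟩),
          Finset.card_insert_of_notMem (by
          simp only [Finset.mem_singleton]
          exact sZ_ne_sStar), Finset.card_singleton]
      have h4 : Multiset.card S.val = 4 := hScard
      have hTeq : S.val = T i :=
        Multiset.eq_of_le_of_card_le hSsub (by rw [h4]; exact (hT i).1)
      -- cover of inl (j0, 0), (j0, 1), (j0, 2)
      have hx : (M j0).1 = x0 := by
        obtain ⟨B, hBT, hB⟩ := (hT i).2 (Sum.inl (j0, 0))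
        rw [← hTeq] at hBT
        rw [Finset.mem_val, hS] at hBT
        rcases Finset.mem_insert.mp hBT with rfl | hBT
        · exact (inl_sX hB).2
        rcases Finset.mem_insert.mp hBT with rfl | hBT
        · exact absurd ((inl_sY hB).1) (by decide)
        rcases Finset.mem_insert.mp hBT with rfl | hBT
        · exact absurd ((inl_sZ hB).1) (by decide)
        rw [Finset.mem_singleton] at hBT
        subst hBT
        exact absurd hB inl_not_sStar_self
      have hy : (M j0).2.1 = y0 := by
        obtain ⟨B, hBT, hB⟩ := (hT i).2 (Sum.inl (j0, 1))
        rw [← hTeq] at hBT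
        rw [Finset.mem_val, hS] at hBT
        rcases Finset.mem_insert.mp hBT with rfl | hBT
        · exact absurd ((inl_sX hB).1) (by decide)
        rcases Finset.mem_insert.mp hBT with rfl | hBT
        · exact (inl_sY hB).2
        rcases Finset.mem_insert.mp hBT with rfl | hBT
        · exact absurd ((inl_sZ hB).1) (by decide)
        rw [Finset.mem_singleton] at hBT
        subst hBT
        exact absurd hB inl_not_sStar_self
      have hz : (M j0).2.2 = z0 := by
        obtain ⟨B, hBT, hB⟩ := (hT i).2 (Sum.inl (j0, 2))
        rw [← hTeq] at hBT
        rw [Finset.mem_val, hS] at hBT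
        rcases Finset.mem_insert.mp hBT with rfl | hBT
        · exact absurd ((inl_sX hB).1) (by decide)
        rcases Finset.mem_insert.mp hBT with rfl | hBT
        · exact absurd ((inl_sY hB).1) (by decide)
        rcases Finset.mem_insert.mp hBT with rfl | hBT
        · exact (inl_sZ hB).2
        rw [Finset.mem_singleton] at hBT
        subst hBT
        exact absurd hB inl_not_sStar_self
      exact ⟨j0, hx ▸ hA0T, hy ▸ hA1T, hz ▸ hA2T⟩
    choose f h1 h2 h3 using key
    -- double-count argument
    have two_le : ∀ (A : Set (TDMUni m)) (i i' : Fin k), i ≠ i' → A ∈ T i → A ∈ T i' →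
        2 ≤ Multiset.count A (TDMFam M) := by
      intro A i i' hne hA hA'
      have hsum : T i + T i' ≤ ∑ x, T x := by
        have hsub : ({i, i'} : Finset (Fin k)) ⊆ Finset.univ := Finset.subset_univ _
        have := Finset.sum_le_sum_of_subset (f := T) hsub
        rwa [Finset.sum_pair hne] at this
      have h2 : 2 ≤ Multiset.count A (T i + T i') := by
        rw [Multiset.count_add]
        have := Multiset.count_pos.mpr hA
        have := Multiset.count_pos.mpr hA'
        omega
      calc 2 ≤ Multiset.count A (T i + T i') := h2
        _ ≤ Multiset.count A (∑ x, T x) := Multiset.count_le_of_le A hsum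
        _ ≤ Multiset.count A (TDMFam M) := Multiset.count_le_of_le A hle
    refine ⟨f, fun i i' hne => ⟨fun heq => ?_, fun heq => ?_, fun heq => ?_⟩⟩
    · have ha := two_le (sX M ((M (f i)).1)) i i' hne (h1 i) (by rw [heq]; exact h1 i')
      have hb := count_sX_le_one (M := M) (f i)
      omega
    · have ha := two_le (sY M ((M (f i)).2.1)) i i' hne (h2 i) (by rw [heq]; exact h2 i')
      have hb := count_sY_le_one (M := M) (f i)
      omega
    · have ha := two_le (sZ M ((M (f i)).2.2)) i i' hne (h3 i) (by rw [heq]; exact h3 i')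
      have hb := count_sZ_le_one (M := M) (f i)
      omega
  · rintro ⟨f, hf⟩
    set T : Fin k → Multiset (Set (TDMUni m)) := fun i =>
      {sX M ((M (f i)).1), sY M ((M (f i)).2.1), sZ M ((M (f i)).2.2), sStar (f i)} with hTdef
    refine ⟨T, ?_, ?_⟩
    · -- sum is a submultiset of the family
      have hTsplit : ∀ i, T i = {sX M ((M (f i)).1)} + {sY M ((M (f i)).2.1)} +
          {sZ M ((M (f i)).2.2)} + {sStar (f i)} := fun i => rfl
      have hsum : (∑ i, T i) =
          (Finset.univ.val.map fun i => sX M ((M (f i)).1)) +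
          (Finset.univ.val.map fun i => sY M ((M (f i)).2.1)) +
          (Finset.univ.val.map fun i => sZ M ((M (f i)).2.2)) +
          (Finset.univ.val.map fun i => sStar (f i)) := by
        simp only [hTsplit, Finset.sum_add_distrib, sum_singleton_map]
      rw [hsum, TDMFam]
      have hinj1 : Function.Injective fun i => (M (f i)).1 := by
        intro i i' h
        by_contra hne
        exact (hf i i' hne).1 h
      have hinj2 : Function.Injective fun i => (M (f i)).2.1 := by
        intro i i' h
        by_contra hne
        exact (hf i i' hne).2.1 h
      have hinj3 : Function.Injective fun i => (M (f i)).2.2 := by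
        intro i i' h
        by_contra hne
        exact (hf i i' hne).2.2 h
      have hinjf : Function.Injective f := by
        intro i i' h
        by_contra hne
        exact (hf i i' hne).1 (by rw [h])
      have aux : ∀ {α : Type} [Fintype α] [DecidableEq α] (g : Fin k → α), Function.Injective g →
          Finset.univ.val.map g ≤ Finset.univ.val := by
        intro α _ _ g hg
        have : (Finset.univ.map ⟨g, hg⟩).val ≤ Finset.univ.val :=
          Finset.val_le_iff.mpr (Finset.subset_univ _)
        rwa [Finset.map_val] at this
      gcongr
      · calc Finset.univ.val.map (fun i => sX M ((M (f i)).1))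
            = (Finset.univ.val.map (fun i => (M (f i)).1)).map (sX M) := by
              rw [Multiset.map_map]; rfl
          _ ≤ Finset.univ.val.map (sX M) := Multiset.map_le_map (aux _ hinj1)
      · calc Finset.univ.val.map (fun i => sY M ((M (f i)).2.1))
            = (Finset.univ.val.map (fun i => (M (f i)).2.1)).map (sY M) := by
              rw [Multiset.map_map]; rfl
          _ ≤ Finset.univ.val.map (sY M) := Multiset.map_le_map (aux _ hinj2)
      · calc Finset.univ.val.map (fun i => sZ M ((M (f i)).2.2))
            = (Finset.univ.val.map (fun i => (M (f i)).2.2)).map (sZ M) := by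
              rw [Multiset.map_map]; rfl
          _ ≤ Finset.univ.val.map (sZ M) := Multiset.map_le_map (aux _ hinj3)
      · calc Finset.univ.val.map (fun i => sStar (f i))
            = (Finset.univ.val.map f).map sStar := by rw [Multiset.map_map]; rfl
          _ ≤ Finset.univ.val.map sStar := Multiset.map_le_map (aux _ hinjf)
    · intro i
      constructor
      · rfl
      · intro w
        refine uni_cases (motive := fun w => ∃ A ∈ T i, w ∈ A) w (fun j c => ?_) (fun q => ?_)
        · have hc : c = 0 ∨ c = 1 ∨ c = 2 := by omega
          by_cases hj : j = f i
          · subst hj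
            rcases hc with rfl | rfl | rfl
            · exact ⟨sX M ((M (f i)).1), by simp [hTdef], inl_mem_sX (f i)⟩
            · exact ⟨sY M ((M (f i)).2.1), by simp [hTdef], inl_mem_sY (f i)⟩
            · exact ⟨sZ M ((M (f i)).2.2), by simp [hTdef], inl_mem_sZ (f i)⟩
          · exact ⟨sStar (f i), by simp [hTdef], inl_sStar_of_ne hj⟩
        · have hq : q = 0 ∨ q = 1 ∨ q = 2 ∨ q = 3 := by omega
          rcases hq with rfl | rfl | rfl | rfl
          · exact ⟨sX M ((M (f i)).1), by simp [hTdef], inr0_sX _⟩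
          · exact ⟨sY M ((M (f i)).2.1), by simp [hTdef], inr1_sY _⟩
          · exact ⟨sZ M ((M (f i)).2.2), by simp [hTdef], inr2_sZ _⟩
          · exact ⟨sStar (f i), by simp [hTdef], inr3_sStar _⟩
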